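/- Let n ≥ 1 and let L : ℂ → Matrix (Fin n) (Fin n) ℂ have entries that are analytic functions of λ. Suppose λ, μ : ℂ → ℂ and h : ℂ → (Fin n → ℂ) are analytic on a neighborhood of 0 ∈ ℂ and satisfy (L(λ(z)))(h(z)) = μ(z) • h(z) for all z near 0, with λ'(0) = 0, μ'(0) ≠ 0, and h(0) ≠ 0. Then (L(λ(0)) − μ(0)·1)(h'(0)) = μ'(0) • h(0). In particular the vector v = h'(0) satisfies (L(λ(0)) − μ(0)·1) v ≠ 0 and (L(λ(0)) − μ(0)·1)² v = 0, so the matrix L(λ(0)) has a non-trivial Jordan block with eigenvalue μ(0), with generalized eigenvector h'(0). -/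

import Mathlib

/-- If `(L(λ(z)))h(z) = μ(z)h(z)` with `λ, μ, h` analytic near `0`,
`λ'(0) = 0`, `μ'(0) ≠ 0` and `h(0) ≠ 0`, then `(L(λ(0)) − μ(0))h'(0) = μ'(0)h(0)`;
in particular `v = h'(0)` satisfies `(L(λ(0)) − μ(0))v ≠ 0` and `(L(λ(0)) − μ(0))²v = 0`,
i.e. `L(λ(0))` has a non-trivial Jordan block with eigenvalue `μ(0)` and generalized
eigenvector `h'(0)`. -/
theorem statement3 (n : ℕ) (hn : 1 ≤ n)
    (L : ℂ → Matrix (Fin n) (Fin n) ℂ)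
    (hL : ∀ (i j : Fin n) (z : ℂ), AnalyticAt ℂ (fun w => L w i j) z)
    (lam mu : ℂ → ℂ) (h : ℂ → Fin n → ℂ)
    (hlam : AnalyticAt ℂ lam 0) (hmu : AnalyticAt ℂ mu 0) (hh : AnalyticAt ℂ h 0)
    (heq : ∀ᶠ z in nhds (0 : ℂ), (L (lam z)).mulVec (h z) = mu z • h z)
    (hlam' : deriv lam 0 = 0) (hmu' : deriv mu 0 ≠ 0) (hh0 : h 0 ≠ 0) :
    (L (lam 0) - mu 0 • 1).mulVec (deriv h 0) = deriv mu 0 • h 0 ∧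
      (L (lam 0) - mu 0 • 1).mulVec (deriv h 0) ≠ 0 ∧
      (L (lam 0) - mu 0 • 1).mulVec ((L (lam 0) - mu 0 • 1).mulVec (deriv h 0)) = 0 := by
  have hd : HasDerivAt h (deriv h 0) 0 := hh.differentiableAt.hasDerivAt
  have hdj : ∀ j, HasDerivAt (fun z => h z j) (deriv h 0 j) 0 := hasDerivAt_pi.mp hd
  have hmud : HasDerivAt mu (deriv mu 0) 0 := hmu.differentiableAt.hasDerivAt
  have hlamd : HasDerivAt lam 0 0 := by
    have := hlam.differentiableAt.hasDerivAt
    rwa [hlam'] at this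
  have hLij : ∀ i j, HasDerivAt (fun z => L (lam z) i j) 0 0 := by
    intro i j
    have := ((hL i j (lam 0)).differentiableAt.hasDerivAt).comp 0 hlamd
    rw [mul_zero] at this; exact this
  -- derivative of LHS component
  have hLHS : ∀ i, HasDerivAt (fun z => (L (lam z)).mulVec (h z) i)
      ((L (lam 0)).mulVec (deriv h 0) i) 0 := by
    intro i
    have : HasDerivAt (fun z => ∑ j, L (lam z) i j * h z j)
        (∑ j, (0 * h 0 j + L (lam 0) i j * deriv h 0 j)) 0 :=
      HasDerivAt.fun_sum fun j _ => (hLij i j).mul (hdj j)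
    simpa [Matrix.mulVec, dotProduct, mul_comm] using this
  have hRHS : ∀ i, HasDerivAt (fun z => mu z * h z i)
      (deriv mu 0 * h 0 i + mu 0 * deriv h 0 i) 0 := fun i => hmud.mul (hdj i)
  have key : ∀ i, (L (lam 0)).mulVec (deriv h 0) i
      = deriv mu 0 * h 0 i + mu 0 * deriv h 0 i := by
    intro i
    have heqi : (fun z => (L (lam z)).mulVec (h z) i) =ᶠ[nhds (0:ℂ)]
        fun z => mu z * h z i := heq.mono fun z hz => by
      have := congrFun hz i
      simpa [Pi.smul_apply, smul_eq_mul] using this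
    have h1 : HasDerivAt (fun z => mu z * h z i) ((L (lam 0)).mulVec (deriv h 0) i) 0 :=
      (hLHS i).congr_of_eventuallyEq heqi.symm
    exact h1.unique (hRHS i)
  have heq0 : (L (lam 0)).mulVec (h 0) = mu 0 • h 0 := heq.self_of_nhds
  have first : (L (lam 0) - mu 0 • 1).mulVec (deriv h 0) = deriv mu 0 • h 0 := by
    funext i
    simp [Matrix.sub_mulVec, Matrix.smul_mulVec, Matrix.one_mulVec, key i,
      Pi.smul_apply, smul_eq_mul]
  refine ⟨first, ?_, ?_⟩
  · rw [first]
    exact smul_ne_zero hmu' hh0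
  · rw [first, Matrix.mulVec_smul, Matrix.sub_mulVec, heq0,
      Matrix.smul_mulVec, Matrix.one_mulVec, sub_self, smul_zero]
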